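/- Let Γ_k (for 2m−2 ≤ k ≤ binom(m,2)) be the spanning subgraph of the complete graph on {1,...,m} consisting of the first k edges in the order: (1,2),...,(m−1,m), (1,m), (1,3),(1,4),...,(1,m−1), then remaining pairs (μ,ν) with 2 ≤ μ < ν in lexicographic order. Then the minimal circuits of Γ_k (circuits of length ≥ 3 admitting no chord in Γ_k) are exactly the triangles of the form (μ_i, μ_j, ν, μ_i) arising from pairs of edges e_i = (μ_i, ν) and e_j = (μ_j, ν) in Γ_k with i < j sharing the same head ν, together with the edge (μ_i, μ_j). -/
import Mathlib

private lemma two_mod_cases (a n : ℕ) (hn : 0 < n) (h : a < 2*n) :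
    a % n = a ∨ a % n + n = a := by
  rcases Nat.lt_or_ge a n with h' | h'
  · exact Or.inl (Nat.mod_eq_of_lt h')
  · right
    rw [Nat.mod_eq_sub_mod h', Nat.mod_eq_of_lt (by omega)]
    omega

private lemma aux_T (m : ℕ) (T : Set (ℕ × ℕ))
    (hTdown : ∀ e ∈ T, ∀ p q : ℕ, 1 ≤ p → p + 2 ≤ q → q < m →
      (p < e.1 ∨ (p = e.1 ∧ q ≤ e.2)) → (p, q) ∈ T)
    (u w : Fin m) (q : ℕ) (h1 : 1 ≤ (u : ℕ)) (huw : (u : ℕ) < (w : ℕ))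
    (hwq : (w : ℕ) ≤ q) (hq : ((u : ℕ), q) ∈ T) :
    u < w ∧ ((w : ℕ) = (u : ℕ) + 1 ∨ (u : ℕ) = 0 ∨ ((u : ℕ), (w : ℕ)) ∈ T) := by
  refine ⟨Fin.lt_def.mpr huw, ?_⟩
  rcases Nat.lt_or_ge (w : ℕ) ((u : ℕ) + 2) with h | h
  · left; omega
  · right; right
    exact hTdown _ hq (u : ℕ) (w : ℕ) h1 h w.isLt (Or.inr ⟨rfl, hwq⟩)

private lemma aux_extract (m : ℕ) (T : Set (ℕ × ℕ)) (u w : Fin m)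
    (h2 : (u : ℕ) + 2 ≤ (w : ℕ))
    (hadj : (u < w ∧ ((w : ℕ) = (u : ℕ) + 1 ∨ (u : ℕ) = 0 ∨ ((u : ℕ), (w : ℕ)) ∈ T)) ∨
            (w < u ∧ ((u : ℕ) = (w : ℕ) + 1 ∨ (w : ℕ) = 0 ∨ ((w : ℕ), (u : ℕ)) ∈ T))) :
    (u : ℕ) = 0 ∨ ((u : ℕ), (w : ℕ)) ∈ T := by
  rcases hadj with ⟨_, h⟩ | ⟨hlt, _⟩
  · rcases h with h | h | h
    · omega
    · exact Or.inl h
    · exact Or.inr h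
  · exact absurd (Fin.lt_def.mp hlt) (by omega)

/-- Lemma 2.6: for `2m−2 ≤ k ≤ C(m,2)`, the minimal circuits of `Γ_k` are exactly the triangles,
i.e. a circuit of `Γ_k` has no chord iff it has length `3` (and a triangle consists of two
edges `(μ_i,ν)`, `(μ_j,ν)` sharing a head together with the edge `(μ_i,μ_j)`).  Vertices are
0-indexed; `Γ_k` consists of the adjacent edges `(j,j+1)`, all edges through the vertex `0`
(including `(0,m−1)`), and a nonempty lexicographically-downward-closed set `T` of "tail" edges
`(p,q)` with `1 ≤ p`, `p+2 ≤ q < m` — exactly the graphs `Γ_k` with `2m−2 ≤ k ≤ C(m,2)`.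
A circuit is given by a vertex list `v 0, …, v (ℓ−1)` of pairwise distinct vertices, `ℓ ≥ 3`,
whose cyclically consecutive vertices are joined by edges of `Γ_k`; a chord is an edge of
`Γ_k` joining two vertices of the circuit that is not traversed by it. -/
theorem stmt10 (m : ℕ) (T : Set (ℕ × ℕ)) (hT : T.Nonempty)
    (hTtail : ∀ e ∈ T, 1 ≤ e.1 ∧ e.1 + 2 ≤ e.2 ∧ e.2 < m)
    (hTdown : ∀ e ∈ T, ∀ p q : ℕ, 1 ≤ p → p + 2 ≤ q → q < m →
      (p < e.1 ∨ (p = e.1 ∧ q ≤ e.2)) → (p, q) ∈ T)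
    (ℓ : ℕ) (hl : 3 ≤ ℓ) (v : ℕ → Fin m)
    (hinj : ∀ i < ℓ, ∀ j < ℓ, v i = v j → i = j) :
    (letI edge : Fin m → Fin m → Prop := fun μ ν =>
       (ν : ℕ) = (μ : ℕ) + 1 ∨ (μ : ℕ) = 0 ∨ ((μ : ℕ), (ν : ℕ)) ∈ T
     letI adj : Fin m → Fin m → Prop := fun u w =>
       (u < w ∧ edge u w) ∨ (w < u ∧ edge w u)
     (∀ i < ℓ, adj (v i) (v ((i + 1) % ℓ))) →
      ((¬ ∃ i < ℓ, ∃ j < ℓ, adj (v i) (v j) ∧ (i + 1) % ℓ ≠ j ∧ (j + 1) % ℓ ≠ i)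
        ↔ ℓ = 3)) := by
  intro hcirc
  have hl0 : 0 < ℓ := by omega
  have hne_val : ∀ p < ℓ, ∀ q < ℓ, p ≠ q → (v p : ℕ) ≠ (v q : ℕ) :=
    fun p hp q hq hpq h => hpq (hinj p hp q hq (Fin.ext h))
  constructor
  · -- no chord → ℓ = 3
    intro hnc
    by_contra hne3
    have hl4 : 4 ≤ ℓ := by omega
    apply hnc
    by_cases h0 : ∃ i < ℓ, (v i : ℕ) = 0
    · -- vertex 0 is on the circuit : chord from it to the second-next vertex
      obtain ⟨i, hi, hvi⟩ := h0
      have hjl : (i + 2) % ℓ < ℓ := Nat.mod_lt _ hl0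
      have hc2 := two_mod_cases (i + 2) ℓ hl0 (by omega)
      have hc1 := two_mod_cases (i + 1) ℓ hl0 (by omega)
      have hc1l : (i + 1) % ℓ < ℓ := Nat.mod_lt _ hl0
      have hc3 := two_mod_cases ((i + 2) % ℓ + 1) ℓ hl0 (by omega)
      have hc3l : ((i + 2) % ℓ + 1) % ℓ < ℓ := Nat.mod_lt _ hl0
      have hij : i ≠ (i + 2) % ℓ := by omega
      refine ⟨i, hi, (i + 2) % ℓ, hjl, ?_, by omega, by omega⟩
      have hvj : (v ((i + 2) % ℓ) : ℕ) ≠ 0 := by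
        have := hne_val i hi ((i + 2) % ℓ) hjl hij
        omega
      exact Or.inl ⟨Fin.lt_def.mpr (by omega), Or.inr (Or.inl hvi)⟩
    · -- vertex 0 is not on the circuit
      push_neg at h0
      have hpos : ∀ i < ℓ, 1 ≤ (v i : ℕ) :=
        fun i hi => Nat.one_le_iff_ne_zero.mpr (h0 i hi)
      obtain ⟨i0, hi0mem, hmin0⟩ := Finset.exists_min_image (Finset.range ℓ)
        (fun i => (v i : ℕ)) ⟨0, Finset.mem_range.mpr hl0⟩
      have hi0 : i0 < ℓ := Finset.mem_range.mp hi0mem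
      have hmin : ∀ j < ℓ, (v i0 : ℕ) ≤ (v j : ℕ) :=
        fun j hj => hmin0 j (Finset.mem_range.mpr hj)
      -- positions of the two circuit-neighbours of the minimal vertex
      have hnal : (i0 + 1) % ℓ < ℓ := Nat.mod_lt _ hl0
      have hnbl : (i0 + ℓ - 1) % ℓ < ℓ := Nat.mod_lt _ hl0
      have hca := two_mod_cases (i0 + 1) ℓ hl0 (by omega)
      have hcb := two_mod_cases (i0 + ℓ - 1) ℓ hl0 (by omega)
      have hna_ne : (i0 + 1) % ℓ ≠ i0 := by omega
      have hnb_ne : (i0 + ℓ - 1) % ℓ ≠ i0 := by omega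
      have hnanb : (i0 + 1) % ℓ ≠ (i0 + ℓ - 1) % ℓ := by omega
      have hcb1 := two_mod_cases ((i0 + ℓ - 1) % ℓ + 1) ℓ hl0 (by omega)
      have hcb1l : ((i0 + ℓ - 1) % ℓ + 1) % ℓ < ℓ := Nat.mod_lt _ hl0
      have hnb1 : ((i0 + ℓ - 1) % ℓ + 1) % ℓ = i0 := by omega
      -- the values at the neighbours
      have hsa : (v i0 : ℕ) < (v ((i0 + 1) % ℓ) : ℕ) :=
        lt_of_le_of_ne (hmin _ hnal) (hne_val i0 hi0 _ hnal (Ne.symm hna_ne))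
      have hsb : (v i0 : ℕ) < (v ((i0 + ℓ - 1) % ℓ) : ℕ) :=
        lt_of_le_of_ne (hmin _ hnbl) (hne_val i0 hi0 _ hnbl (Ne.symm hnb_ne))
      have hab : (v ((i0 + 1) % ℓ) : ℕ) ≠ (v ((i0 + ℓ - 1) % ℓ) : ℕ) :=
        hne_val _ hnal _ hnbl hnanb
      have hea := hcirc i0 hi0
      have heb := hcirc ((i0 + ℓ - 1) % ℓ) hnbl
      rw [hnb1] at heb
      have hs1 : 1 ≤ (v i0 : ℕ) := hpos i0 hi0
      -- y := the larger neighbour value; (s, y) ∈ T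
      obtain ⟨y, hy1, hy2, hyT⟩ :
          ∃ y : ℕ, (v ((i0 + 1) % ℓ) : ℕ) ≤ y ∧ (v ((i0 + ℓ - 1) % ℓ) : ℕ) ≤ y ∧
            ((v i0 : ℕ), y) ∈ T := by
        rcases le_total (v ((i0 + 1) % ℓ) : ℕ) (v ((i0 + ℓ - 1) % ℓ) : ℕ) with h | h
        · refine ⟨(v ((i0 + ℓ - 1) % ℓ) : ℕ), h, le_refl _, ?_⟩
          rcases aux_extract m T (v i0) (v ((i0 + ℓ - 1) % ℓ)) (by omega) heb.symm with h' | h'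
          · omega
          · exact h'
        · refine ⟨(v ((i0 + 1) % ℓ) : ℕ), le_refl _, h, ?_⟩
          rcases aux_extract m T (v i0) (v ((i0 + 1) % ℓ)) (by omega) hea with h' | h'
          · omega
          · exact h'
      by_cases hB1 : ∃ t < ℓ, t ≠ i0 ∧ t ≠ (i0 + 1) % ℓ ∧ t ≠ (i0 + ℓ - 1) % ℓ ∧
          (v t : ℕ) ≤ y
      · -- chord from the minimal vertex to t
        obtain ⟨t, ht, hti0, htna, htnb, hty⟩ := hB1
        have hct := two_mod_cases (t + 1) ℓ hl0 (by omega)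
        have hctl : (t + 1) % ℓ < ℓ := Nat.mod_lt _ hl0
        refine ⟨i0, hi0, t, ht, ?_, by omega, by omega⟩
        have hst : (v i0 : ℕ) < (v t : ℕ) :=
          lt_of_le_of_ne (hmin t ht) (hne_val i0 hi0 t ht (Ne.symm hti0))
        exact Or.inl (aux_T m T hTdown (v i0) (v t) y hs1 hst hty hyT)
      · -- all other vertices are above y : chord between the two neighbours
        push_neg at hB1
        rcases le_total (v ((i0 + 1) % ℓ) : ℕ) (v ((i0 + ℓ - 1) % ℓ) : ℕ) with hd | hd
        · -- x = v ((i0+1)%ℓ), its far neighbour is at (i0+1)%ℓ + 1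
          have hpcl : ((i0 + 1) % ℓ + 1) % ℓ < ℓ := Nat.mod_lt _ hl0
          have hcc := two_mod_cases ((i0 + 1) % ℓ + 1) ℓ hl0 (by omega)
          have hpc1 : ((i0 + 1) % ℓ + 1) % ℓ ≠ i0 := by omega
          have hpc2 : ((i0 + 1) % ℓ + 1) % ℓ ≠ (i0 + 1) % ℓ := by omega
          have hpc3 : ((i0 + 1) % ℓ + 1) % ℓ ≠ (i0 + ℓ - 1) % ℓ := by omega
          have hyc : y < (v (((i0 + 1) % ℓ + 1) % ℓ) : ℕ) :=
            hB1 _ hpcl hpc1 hpc2 hpc3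
          have hxy : (v ((i0 + 1) % ℓ) : ℕ) < (v ((i0 + ℓ - 1) % ℓ) : ℕ) :=
            lt_of_le_of_ne hd hab
          have hedge := hcirc ((i0 + 1) % ℓ) hnal
          have hxcT : ((v ((i0 + 1) % ℓ) : ℕ), (v (((i0 + 1) % ℓ + 1) % ℓ) : ℕ)) ∈ T := by
            rcases aux_extract m T (v ((i0 + 1) % ℓ)) (v (((i0 + 1) % ℓ + 1) % ℓ))
              (by omega) hedge with h' | h'
            · exact absurd h' (by have := hpos _ hnal; omega)
            · exact h'
          refine ⟨(i0 + 1) % ℓ, hnal, (i0 + ℓ - 1) % ℓ, hnbl, ?_, ?_, ?_⟩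
          · exact Or.inl (aux_T m T hTdown (v ((i0 + 1) % ℓ)) (v ((i0 + ℓ - 1) % ℓ))
              (v (((i0 + 1) % ℓ + 1) % ℓ) : ℕ) (hpos _ hnal) hxy (by omega) hxcT)
          · exact hpc3
          · rw [hnb1]; exact Ne.symm hna_ne
        · -- x = v ((i0+ℓ-1)%ℓ), its far neighbour is at (i0+ℓ-2)%ℓ
          have hpcl : (i0 + ℓ - 2) % ℓ < ℓ := Nat.mod_lt _ hl0
          have hcc := two_mod_cases (i0 + ℓ - 2) ℓ hl0 (by omega)
          have hcc1 := two_mod_cases ((i0 + ℓ - 2) % ℓ + 1) ℓ hl0 (by omega)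
          have hcc1l : ((i0 + ℓ - 2) % ℓ + 1) % ℓ < ℓ := Nat.mod_lt _ hl0
          have hpcnb : ((i0 + ℓ - 2) % ℓ + 1) % ℓ = (i0 + ℓ - 1) % ℓ := by omega
          have hpc1 : (i0 + ℓ - 2) % ℓ ≠ i0 := by omega
          have hpc2 : (i0 + ℓ - 2) % ℓ ≠ (i0 + 1) % ℓ := by omega
          have hpc3 : (i0 + ℓ - 2) % ℓ ≠ (i0 + ℓ - 1) % ℓ := by omega
          have hyc : y < (v ((i0 + ℓ - 2) % ℓ) : ℕ) := hB1 _ hpcl hpc1 hpc2 hpc3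
          have hxy : (v ((i0 + ℓ - 1) % ℓ) : ℕ) < (v ((i0 + 1) % ℓ) : ℕ) :=
            lt_of_le_of_ne hd (Ne.symm hab)
          have hedge := hcirc ((i0 + ℓ - 2) % ℓ) hpcl
          rw [hpcnb] at hedge
          have hxcT : ((v ((i0 + ℓ - 1) % ℓ) : ℕ), (v ((i0 + ℓ - 2) % ℓ) : ℕ)) ∈ T := by
            rcases aux_extract m T (v ((i0 + ℓ - 1) % ℓ)) (v ((i0 + ℓ - 2) % ℓ))
              (by omega) hedge.symm with h' | h'
            · exact absurd h' (by have := hpos _ hnbl; omega)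
            · exact h'
          refine ⟨(i0 + ℓ - 1) % ℓ, hnbl, (i0 + 1) % ℓ, hnal, ?_, ?_, ?_⟩
          · exact Or.inl (aux_T m T hTdown (v ((i0 + ℓ - 1) % ℓ)) (v ((i0 + 1) % ℓ))
              (v ((i0 + ℓ - 2) % ℓ) : ℕ) (hpos _ hnbl) hxy (by omega) hxcT)
          · rw [hnb1]; exact Ne.symm hna_ne
          · have hcc2 := two_mod_cases ((i0 + 1) % ℓ + 1) ℓ hl0 (by omega)
            have hcc2l : ((i0 + 1) % ℓ + 1) % ℓ < ℓ := Nat.mod_lt _ hl0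
            omega
  · -- a triangle has no chord
    rintro rfl ⟨i, hi, j, hj, hadj, h1, h2⟩
    by_cases hij : i = j
    · subst hij
      rcases hadj with ⟨h, _⟩ | ⟨h, _⟩ <;> exact absurd h (lt_irrefl _)
    · omega
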